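/- In the lower-bound graph with input edges, if S_A[i] = 1 and S_B[i] = 1 (so both edges (ℓ_i,ℓ_{k+1}) and (r_i,r_{k+1}) are absent), then the distance between ℓ'_i and r'_i is at least 6P + 2t + 1. -/

import Mathlib

/-! The lower-bound graph construction used to prove lower bounds for
`t`-round proof-labeling schemes for the diameter predicate.

The graph has base nodes `ℓ_0, …, ℓ_{k+1}`, `ℓ'_0, …, ℓ'_{k-1}`, `t_h`, `f_h`
(`h < log k`) on the left, and symmetric nodes on the right. Base nodes are
connected by paths (whose interior nodes are fresh): `P`-paths connect
`ℓ_i–ℓ'_i`, `ℓ_i–ℓ_k`, `ℓ_k–ℓ_{k+1}`, `ℓ_{k+1}–t_h`, `ℓ_{k+1}–f_h`, and `ℓ_i`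
to the nodes encoding its binary representation (`t_h` if bit `h` of `i` is 1,
`f_h` otherwise); symmetrically on the right. `(2t+1)`-paths connect `t_h–f'_h`,
`f_h–t'_h` and `ℓ_{k+1}–r_{k+1}`. Finally, the input edge `(ℓ_i, ℓ_{k+1})` is
present iff `S_A[i] = 0`, and `(r_i, r_{k+1})` iff `S_B[i] = 0`. -/

/-- The base (named) nodes of the construction. `L i` is `ℓ_i` for `i < k`,
`Lk` is `ℓ_k`, `Lk1` is `ℓ_{k+1}`, `L' i` is `ℓ'_i`, `Tl h` is `t_h`,
`Fl h` is `f_h`; similarly on the right. -/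
inductive LBBase (k lk : ℕ) : Type
  | L (i : Fin k) | L' (i : Fin k) | Lk | Lk1 | Tl (h : Fin lk) | Fl (h : Fin lk)
  | R (i : Fin k) | R' (i : Fin k) | Rk | Rk1 | Tr (h : Fin lk) | Fr (h : Fin lk)

/-- Names for the connecting paths (and the two families of input edges). -/
inductive LBEdge (k lk : ℕ) : Type
  | ll' (i : Fin k) | llk (i : Fin k) | lklk1
  | lk1t (h : Fin lk) | lk1f (h : Fin lk) | lenc (i : Fin k) (h : Fin lk)
  | rr' (i : Fin k) | rrk (i : Fin k) | rkrk1
  | rk1t (h : Fin lk) | rk1f (h : Fin lk) | renc (i : Fin k) (h : Fin lk)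
  | cr1 (h : Fin lk) | cr2 (h : Fin lk) | crC
  | inA (i : Fin k) | inB (i : Fin k)

namespace LB

variable {k lk : ℕ}

/-- The two endpoints of each connecting path. -/
def ends : LBEdge k lk → LBBase k lk × LBBase k lk
  | .ll' i => (.L i, .L' i)
  | .llk i => (.L i, .Lk)
  | .lklk1 => (.Lk, .Lk1)
  | .lk1t h => (.Lk1, .Tl h)
  | .lk1f h => (.Lk1, .Fl h)
  | .lenc i h => (.L i, if Nat.testBit i.val h.val then .Tl h else .Fl h)
  | .rr' i => (.R i, .R' i)
  | .rrk i => (.R i, .Rk)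
  | .rkrk1 => (.Rk, .Rk1)
  | .rk1t h => (.Rk1, .Tr h)
  | .rk1f h => (.Rk1, .Fr h)
  | .renc i h => (.R i, if Nat.testBit i.val h.val then .Tr h else .Fr h)
  | .cr1 h => (.Tl h, .Fr h)
  | .cr2 h => (.Fl h, .Tr h)
  | .crC => (.Lk1, .Rk1)
  | .inA i => (.L i, .Lk1)
  | .inB i => (.R i, .Rk1)

/-- The number of edges of each connecting path: `2t+1` for the three
cross families, `1` for the input edges, and `P` for all others. -/
def elen (P t : ℕ) : LBEdge k lk → ℕ
  | .cr1 _ => 2 * t + 1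
  | .cr2 _ => 2 * t + 1
  | .crC => 2 * t + 1
  | .inA _ => 1
  | .inB _ => 1
  | _ => P

/-- Which connecting paths are present: all of them, except that the input edge
`(ℓ_i, ℓ_{k+1})` is present iff `S_A[i] = 0`, and `(r_i, r_{k+1})` iff `S_B[i] = 0`. -/
def active (SA SB : Fin k → Bool) : LBEdge k lk → Prop
  | .inA i => SA i = false
  | .inB i => SB i = false
  | _ => True

/-- The vertices of the lower-bound graph: base nodes, plus the interior
nodes of the connecting paths (a path with `m` edges has `m - 1` interior
nodes, numbered consecutively from its first endpoint). -/
def Vtx (k lk P t : ℕ) : Type :=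
  LBBase k lk ⊕ (Σ e : LBEdge k lk, Fin (elen P t e - 1))

/-- One direction of the adjacency relation of the lower-bound graph. -/
def Rel (k lk P t : ℕ) (SA SB : Fin k → Bool) : Vtx k lk P t → Vtx k lk P t → Prop :=
  fun x y =>
    (∃ e : LBEdge k lk, active SA SB e ∧ elen P t e = 1 ∧
        x = Sum.inl (ends e).1 ∧ y = Sum.inl (ends e).2) ∨
    (∃ (e : LBEdge k lk) (j : Fin (elen P t e - 1)), active SA SB e ∧
        x = Sum.inl (ends e).1 ∧ y = Sum.inr ⟨e, j⟩ ∧ j.val = 0) ∨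
    (∃ (e : LBEdge k lk) (j : Fin (elen P t e - 1)), active SA SB e ∧
        x = Sum.inr ⟨e, j⟩ ∧ y = Sum.inl (ends e).2 ∧ j.val + 2 = elen P t e) ∨
    (∃ (e : LBEdge k lk) (j j' : Fin (elen P t e - 1)), active SA SB e ∧
        x = Sum.inr ⟨e, j⟩ ∧ y = Sum.inr ⟨e, j'⟩ ∧ j'.val = j.val + 1)

/-- The lower-bound graph. -/
def graph (k lk P t : ℕ) (SA SB : Fin k → Bool) : SimpleGraph (Vtx k lk P t) :=
  SimpleGraph.fromRel (Rel k lk P t SA SB)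

end LB

namespace LB
variable {k lk P t : ℕ} {SA SB : Fin k → Bool}

/-- Potential function on base nodes: distance from `ℓ'_i` in the hardest instance. -/
def fb (P t : ℕ) (i : Fin k) : LBBase k lk → ℕ
  | .L' j => if j = i then 0 else 4*P
  | .L j => if j = i then P else 3*P
  | .Lk => 2*P
  | .Lk1 => 3*P
  | .Tl h => if Nat.testBit i.val h.val then 2*P else 4*P
  | .Fl h => if Nat.testBit i.val h.val then 4*P else 2*P
  | .Rk1 => 3*P + 2*t + 1
  | .Rk => 4*P + 2*t + 1
  | .Tr h => if Nat.testBit i.val h.val then 4*P + 2*t + 1 else 2*P + 2*t + 1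
  | .Fr h => if Nat.testBit i.val h.val then 2*P + 2*t + 1 else 4*P + 2*t + 1
  | .R j => if j = i then 5*P + 2*t + 1 else 3*P + 2*t + 1
  | .R' j => if j = i then 6*P + 2*t + 1 else 4*P + 2*t + 1

/-- Extension to interior path nodes. -/
def fv (P t : ℕ) (i : Fin k) : Vtx k lk P t → ℕ
  | Sum.inl b => fb P t i b
  | Sum.inr ⟨e, j⟩ =>
      min (fb P t i (ends e).1 + j.val + 1)
          (fb P t i (ends e).2 + (elen P t e - 1 - j.val))

lemma key {i : Fin k} (hA : SA i = true) (hB : SB i = true) :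
    ∀ e : LBEdge k lk, active SA SB e →
      fb P t i (ends e).1 ≤ fb P t i (ends e).2 + elen P t e ∧
      fb P t i (ends e).2 ≤ fb P t i (ends e).1 + elen P t e := by
  intro e he
  cases e with
  | lenc j h =>
    rcases eq_or_ne j i with rfl | hne
    · by_cases hb : Nat.testBit j.val h.val <;> simp [ends, elen, fb, hb] <;> omega
    · by_cases hb : Nat.testBit j.val h.val <;>
        by_cases hb' : Nat.testBit i.val h.val <;>
          simp [ends, elen, fb, hb, hb', hne] <;> omega
  | renc j h =>
    rcases eq_or_ne j i with rfl | hne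
    · by_cases hb : Nat.testBit j.val h.val <;> simp [ends, elen, fb, hb] <;> omega
    · by_cases hb : Nat.testBit j.val h.val <;>
        by_cases hb' : Nat.testBit i.val h.val <;>
          simp [ends, elen, fb, hb, hb', hne] <;> omega
  | inA j =>
    simp only [active] at he
    have hne : j ≠ i := by rintro rfl; rw [hA] at he; cases he
    simp [ends, elen, fb, hne]
  | inB j =>
    simp only [active] at he
    have hne : j ≠ i := by rintro rfl; rw [hB] at he; cases he
    simp [ends, elen, fb, hne]
  | _ =>
    first
    | (simp [ends, elen, fb]; split_ifs <;> omega)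
    | (simp [ends, elen, fb]; omega)

lemma lip {i : Fin k} (hA : SA i = true) (hB : SB i = true)
    {x y : Vtx k lk P t} (h : Rel k lk P t SA SB x y) :
    fv P t i y ≤ fv P t i x + 1 ∧ fv P t i x ≤ fv P t i y + 1 := by
  obtain ⟨e, he, h1, rfl, rfl⟩ | ⟨e, j, he, rfl, rfl, hj⟩ |
      ⟨e, j, he, rfl, rfl, hj⟩ | ⟨e, j, j', he, rfl, rfl, hj⟩ := h
  · have hk2 := key (P := P) (t := t) hA hB e he
    simp only [fv]; omega
  · have hk2 := key (P := P) (t := t) hA hB e he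
    have hlt := j.isLt
    simp only [fv]; omega
  · have hk2 := key (P := P) (t := t) hA hB e he
    have hlt := j.isLt
    simp only [fv]; omega
  · have hlt := j.isLt
    have hlt' := j'.isLt
    simp only [fv]; omega

lemma walk_bound {i : Fin k} (hA : SA i = true) (hB : SB i = true)
    {u v : Vtx k lk P t} (w : (graph k lk P t SA SB).Walk u v) :
    fv P t i v ≤ fv P t i u + w.length := by
  induction w with
  | nil => simp
  | cons hadj p ih =>
    rw [graph, SimpleGraph.fromRel_adj] at hadj
    obtain ⟨-, hr | hr⟩ := hadj
    · have := (lip hA hB hr).1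
      simp only [SimpleGraph.Walk.length_cons]; omega
    · have := (lip hA hB hr).2
      simp only [SimpleGraph.Walk.length_cons]; omega

lemma elen_pos (hP : 1 ≤ P) (e : LBEdge k lk) : 1 ≤ elen P t e := by
  cases e <;> simp [elen] <;> omega

lemma inr_ne (e : LBEdge k lk) (a b : Fin (elen P t e - 1)) (h : a.val ≠ b.val) :
    (Sum.inr ⟨e, a⟩ : Vtx k lk P t) ≠ Sum.inr ⟨e, b⟩ := by
  intro hc
  apply h
  injection hc with h1
  injection h1 with h2 h3
  rw [h3]

lemma reach_interior (hP : 1 ≤ P) (e : LBEdge k lk) (he : active SA SB e) :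
    ∀ (j : ℕ) (hj : j < elen P t e - 1),
      (graph k lk P t SA SB).Reachable (Sum.inl (ends e).1)
        (Sum.inr ⟨e, ⟨j, hj⟩⟩ : Vtx k lk P t)
  | 0, hj =>
    SimpleGraph.Adj.reachable <| by
      rw [graph]; refine (SimpleGraph.fromRel_adj _ _ _).mpr ?_
      exact ⟨Sum.inl_ne_inr, Or.inl <| Or.inr <| Or.inl ⟨e, ⟨0, hj⟩, he, rfl, rfl, rfl⟩⟩
  | (j+1), hj =>
    (reach_interior hP e he j (by omega)).trans <|
      SimpleGraph.Adj.reachable <| by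
        rw [graph]; refine (SimpleGraph.fromRel_adj _ _ _).mpr ?_
        refine ⟨inr_ne e _ _ (by simp), Or.inl <| Or.inr <| Or.inr <| Or.inr
          ⟨e, ⟨j, by omega⟩, ⟨j+1, hj⟩, he, rfl, rfl, rfl⟩⟩

lemma ends_ne (e : LBEdge k lk) : (ends e).1 ≠ (ends e).2 := by
  cases e <;> simp [ends] <;> split_ifs <;> simp

lemma reach_ends (hP : 1 ≤ P) (e : LBEdge k lk) (he : active SA SB e) :
    (graph k lk P t SA SB).Reachable
      (Sum.inl (ends e).1) (Sum.inl (ends e).2) := by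
  rcases Nat.lt_or_ge (elen P t e) 2 with hm | hm
  · have h1 : elen P t e = 1 := by have := elen_pos (t := t) hP e; omega
    exact SimpleGraph.Adj.reachable <| by
      rw [graph]; refine (SimpleGraph.fromRel_adj _ _ _).mpr ?_
      exact ⟨fun hc => ends_ne e (Sum.inl_injective hc), Or.inl <| Or.inl ⟨e, he, h1, rfl, rfl⟩⟩
  · refine (reach_interior hP e he (elen P t e - 2) (by omega)).trans <|
      SimpleGraph.Adj.reachable ?_
    rw [graph]; refine (SimpleGraph.fromRel_adj _ _ _).mpr ?_
    exact ⟨Sum.inr_ne_inl, Or.inl <| Or.inr <| Or.inr <| Or.inl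
      ⟨e, ⟨elen P t e - 2, by omega⟩, he, rfl, rfl, by
        show elen P t e - 2 + 2 = elen P t e; omega⟩⟩

lemma reach_main (hP : 1 ≤ P) (i : Fin k) :
    (graph k lk P t SA SB).Reachable
      (Sum.inl (LBBase.L' i)) (Sum.inl (LBBase.R' i)) := by
  have h1 := reach_ends (SA := SA) (SB := SB) (t := t) hP ((LBEdge.ll' i : LBEdge k lk)) trivial
  have h2 := reach_ends (SA := SA) (SB := SB) (t := t) hP ((LBEdge.llk i : LBEdge k lk)) trivial
  have h3 := reach_ends (SA := SA) (SB := SB) (t := t) hP (LBEdge.lklk1 : LBEdge k lk) trivial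
  have h4 := reach_ends (SA := SA) (SB := SB) (t := t) hP (LBEdge.crC : LBEdge k lk) trivial
  have h5 := reach_ends (SA := SA) (SB := SB) (t := t) hP (LBEdge.rkrk1 : LBEdge k lk) trivial
  have h6 := reach_ends (SA := SA) (SB := SB) (t := t) hP ((LBEdge.rrk i : LBEdge k lk)) trivial
  have h7 := reach_ends (SA := SA) (SB := SB) (t := t) hP ((LBEdge.rr' i : LBEdge k lk)) trivial
  simp only [ends] at h1 h2 h3 h4 h5 h6 h7
  exact h1.symm.trans <| h2.trans <| h3.trans <| h4.trans <|
    h5.symm.trans <| h6.symm.trans h7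

end LB

/-- In the lower-bound graph with input edges, if
`S_A[i] = 1` and `S_B[i] = 1` (so both edges `(ℓ_i, ℓ_{k+1})` and
`(r_i, r_{k+1})` are absent), then the distance between `ℓ'_i` and `r'_i`
is at least `6P + 2t + 1`. -/
theorem stmt12 (k lk P t : ℕ) (hk : k = 2 ^ lk) (hP : 1 ≤ P) (ht : 1 ≤ t)
    (SA SB : Fin k → Bool) (i : Fin k) (hA : SA i = true) (hB : SB i = true) :
    6 * P + 2 * t + 1 ≤
      (LB.graph k lk P t SA SB).dist
        (Sum.inl (LBBase.L' i)) (Sum.inl (LBBase.R' i)) := by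
  obtain ⟨w, hw⟩ := (LB.reach_main (k := k) (lk := lk) (P := P) (t := t) (SA := SA) (SB := SB) hP i).exists_walk_length_eq_dist
  have hb := LB.walk_bound hA hB w
  simp [LB.fv, LB.fb] at hb
  omega
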